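/- For every finite nonempty set X of non-negative integers with 0 ∈ X, there exists a connected simple graph G that admits an integer additive set-sequential labeling with respect to X. -/

import Mathlib

open Finset Pointwise

/-- The induced edge-label map: `f⁺(uv) = f(u) + f(v)` (sum set). -/
def edgeLabel {V : Type*} (f : V → Finset ℕ) : Sym2 V → Finset ℕ :=
  Sym2.lift ⟨fun u v => f u + f v, fun u v => add_comm (f u) (f v)⟩

/-- An integer additive set-labeling of `G` w.r.t. ground set `X`:
an injective assignment of nonempty subsets of `X` to the vertices. -/
def IsIASL {V : Type*} (X : Finset ℕ) (f : V → Finset ℕ) : Prop :=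
  Function.Injective f ∧ (∀ v, (f v).Nonempty) ∧ (∀ v, f v ⊆ X)

/-- An integer additive set-indexer: an IASL whose induced edge map is
injective on the edge set. -/
def IsIASI {V : Type*} (G : SimpleGraph V) (X : Finset ℕ) (f : V → Finset ℕ) : Prop :=
  IsIASL X f ∧ Set.InjOn (edgeLabel f) G.edgeSet

/-- The family of vertex labels. -/
def vertexLabels {V : Type*} (f : V → Finset ℕ) : Set (Finset ℕ) := Set.range f

/-- The family of edge labels. -/
def edgeLabels {V : Type*} (G : SimpleGraph V) (f : V → Finset ℕ) : Set (Finset ℕ) :=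
  edgeLabel f '' G.edgeSet

/-- An integer additive set-sequential labeling: an IASI such that the vertex and
edge labels together are exactly the nonempty subsets of `X`. -/
def IsIASSL {V : Type*} (G : SimpleGraph V) (X : Finset ℕ) (f : V → Finset ℕ) : Prop :=
  IsIASI G X f ∧
    vertexLabels f ∪ edgeLabels G f = {A : Finset ℕ | A ⊆ X ∧ A.Nonempty}

/-- An integer additive set-sequential indexer: an IASSL whose vertex labels and
edge labels are disjoint (equivalently, the combined map `f*` is injective). -/
def IsIASSI {V : Type*} (G : SimpleGraph V) (X : Finset ℕ) (f : V → Finset ℕ) : Prop :=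
  IsIASSL G X f ∧ Disjoint (vertexLabels f) (edgeLabels G f)

/-- A nonempty subset `A` of `X` is a non-trivial sum set in `X` if `A = B + C`
for nonempty subsets `B, C ⊆ X`, neither equal to `{0}`. -/
def IsNontrivialSumset (X A : Finset ℕ) : Prop :=
  ∃ B C : Finset ℕ, B.Nonempty ∧ C.Nonempty ∧ B ⊆ X ∧ C ⊆ X ∧
    B ≠ {0} ∧ C ≠ {0} ∧ A = B + C

/-- For every finite nonempty ground set `X` containing `0`, there exists a
connected graph admitting an IASSL with respect to `X`. -/
lemma singleton_zero_add (s : Finset ℕ) : ({0} : Finset ℕ) + s = s := by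
  ext x; simp [Finset.mem_add]

theorem exists_connected_iassl (X : Finset ℕ) (hX : X.Nonempty) (h0 : 0 ∈ X) :
    ∃ (V : Type) (_ : Fintype V) (G : SimpleGraph V) (f : V → Finset ℕ),
      G.Connected ∧ IsIASSL G X f := by
  classical
  set F : Finset (Finset ℕ) := X.powerset.filter (fun s => s.Nonempty) with hF
  have memF : ∀ A : Finset ℕ, A ∈ F ↔ A ⊆ X ∧ A.Nonempty := by
    intro A; simp [hF, Finset.mem_filter, Finset.mem_powerset]
  let V : Type := {A : Finset ℕ // A ∈ F}
  have hzmem : ({0} : Finset ℕ) ∈ F := (memF _).2 ⟨by simpa using h0, ⟨0, by simp⟩⟩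
  let z : V := ⟨{0}, hzmem⟩
  let G : SimpleGraph V :=
    { Adj := fun a b => a ≠ b ∧ (a = z ∨ b = z)
      symm := ⟨by rintro a b ⟨h1, h2⟩; exact ⟨h1.symm, h2.symm⟩⟩
      loopless := ⟨by rintro a ⟨h1, _⟩; exact h1 rfl⟩ }
  let f : V → Finset ℕ := Subtype.val
  have hlabel : ∀ a b : V, a = z → edgeLabel f s(a, b) = f b := by
    rintro a b rfl
    show f z + f b = f b
    exact singleton_zero_add _
  refine ⟨V, inferInstance, G, f, ?_, ?_⟩
  · rw [SimpleGraph.connected_iff]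
    refine ⟨?_, ⟨z⟩⟩
    · intro u v
      by_cases huv : u = v
      · exact huv ▸ SimpleGraph.Reachable.refl u
      by_cases hu : u = z
      · exact (SimpleGraph.Adj.reachable ⟨huv, Or.inl hu⟩)
      by_cases hv : v = z
      · exact (SimpleGraph.Adj.reachable ⟨huv, Or.inr hv⟩)
      · exact (SimpleGraph.Adj.reachable (G := G) ⟨hu, Or.inr rfl⟩).trans
          (SimpleGraph.Adj.reachable ⟨fun h => hv h.symm, Or.inl rfl⟩)
  · constructor
    · refine ⟨⟨Subtype.val_injective, ?_, ?_⟩, ?_⟩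
      · intro v; exact ((memF _).1 v.2).2
      · intro v; exact ((memF _).1 v.2).1
      · -- InjOn edgeLabel
        intro e1 he1 e2 he2 heq
        induction e1 with
        | h a b =>
        induction e2 with
        | h c d =>
        rw [SimpleGraph.mem_edgeSet] at he1 he2
        obtain ⟨hab, hz1⟩ := he1
        obtain ⟨hcd, hz2⟩ := he2
        rcases hz1 with h1 | h1 <;> rcases hz2 with h2 | h2
        · rw [hlabel a b h1, hlabel c d h2] at heq
          rw [h1, h2, Subtype.val_injective heq]
        · rw [hlabel a b h1] at heq
          rw [Sym2.eq_swap] at heq ⊢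
          rw [hlabel d c h2] at heq
          rw [h1, h2, Subtype.val_injective heq]
        · rw [Sym2.eq_swap] at heq
          rw [hlabel b a h1, hlabel c d h2] at heq
          rw [Sym2.eq_swap, h1, h2, Subtype.val_injective heq]
        · rw [Sym2.eq_swap] at heq ⊢
          rw [hlabel b a h1] at heq
          rw [Sym2.eq_swap] at heq
          rw [hlabel d c h2] at heq
          rw [h1, h2, Subtype.val_injective heq]
          exact Sym2.eq_swap
    · ext A
      simp only [Set.mem_union, Set.mem_setOf_eq]
      constructor
      · rintro (⟨v, rfl⟩ | ⟨e, he, rfl⟩)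
        · exact (memF _).1 v.2
        · induction e with
          | h a b =>
          rw [SimpleGraph.mem_edgeSet] at he
          obtain ⟨hab, hz⟩ := he
          rcases hz with h | h
          · rw [hlabel a b h]; exact (memF _).1 b.2
          · rw [Sym2.eq_swap, hlabel b a h]; exact (memF _).1 a.2
      · intro hA
        exact Or.inl ⟨⟨A, (memF A).2 hA⟩, rfl⟩
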